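/- arXiv:0812.0165 — 2 statements merged into one kernel-verified Lean document; each statement's English description precedes it below -/
import Mathlib

section
/- If α := e^{-(π/2)μ²Λ²} ≤ 1/4 where μ = min(a, β) and a, β, Λ > 0, then ∑_{(n,m)∈ℤ², (n,m)≠(0,0)} e^{-(π/2)((nΛa)² + (mΛβ)²)} ≤ 8 e^{-(π/2)(μΛ)²}. -/
private lemma geomZ_summable {α : ℝ} (hα0 : 0 < α) (hα1 : α < 1) :
    Summable (fun n : ℤ => α ^ n.natAbs) := by
  apply Summable.of_nat_of_neg
  · simpa using summable_geometric_of_lt_one hα0.le hα1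
  · simpa using summable_geometric_of_lt_one hα0.le hα1

private lemma geomZ_tsum {α : ℝ} (hα0 : 0 < α) (hα1 : α < 1) :
    ∑' n : ℤ, α ^ n.natAbs = 2 * (1 - α)⁻¹ - 1 := by
  rw [Summable.tsum_of_nat_of_neg (by simpa using summable_geometric_of_lt_one hα0.le hα1)
    (by simpa using summable_geometric_of_lt_one hα0.le hα1)]
  simp only [Int.natAbs_natCast, Int.natAbs_neg]
  rw [tsum_geometric_of_lt_one hα0.le hα1]
  norm_num
  ring

private lemma geomZ2_summable {α : ℝ} (hα0 : 0 < α) (hα1 : α < 1) :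
    Summable (fun p : ℤ × ℤ => α ^ p.1.natAbs * α ^ p.2.natAbs) := by
  apply Summable.mul_of_nonneg (geomZ_summable hα0 hα1) (geomZ_summable hα0 hα1)
  · intro n; positivity
  · intro n; positivity

private lemma geomZ_norm_summable {α : ℝ} (hα0 : 0 < α) (hα1 : α < 1) :
    Summable (fun n : ℤ => ‖α ^ n.natAbs‖) := by
  simpa [Real.norm_eq_abs, abs_pow, abs_of_pos hα0] using geomZ_summable hα0 hα1

private lemma geomZ2_tsum {α : ℝ} (hα0 : 0 < α) (hα1 : α < 1) :
    ∑' p : ℤ × ℤ, α ^ p.1.natAbs * α ^ p.2.natAbs = (2 * (1 - α)⁻¹ - 1) ^ 2 := by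
  rw [← tsum_mul_tsum_of_summable_norm (geomZ_norm_summable hα0 hα1)
    (geomZ_norm_summable hα0 hα1), geomZ_tsum hα0 hα1]
  ring

private lemma geomZ2_tsum_ne_zero {α : ℝ} (hα0 : 0 < α) (hα1 : α < 1) :
    ∑' p : {p : ℤ × ℤ // p ≠ 0}, α ^ p.1.1.natAbs * α ^ p.1.2.natAbs
      = (2 * (1 - α)⁻¹ - 1) ^ 2 - 1 := by
  have hsum := geomZ2_summable hα0 hα1
  have h := Summable.sum_add_tsum_subtype_compl hsum ({0} : Finset (ℤ × ℤ))
  rw [Finset.sum_singleton] at h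
  have heq : ∑' x : {x : ℤ × ℤ // x ∉ ({0} : Finset (ℤ × ℤ))},
      α ^ (x : ℤ × ℤ).1.natAbs * α ^ (x : ℤ × ℤ).2.natAbs
      = ∑' p : {p : ℤ × ℤ // p ≠ 0}, α ^ p.1.1.natAbs * α ^ p.1.2.natAbs :=
    Equiv.tsum_eq (Equiv.subtypeEquivRight (fun p => by simp))
      (fun p : {p : ℤ × ℤ // p ≠ 0} => α ^ p.1.1.natAbs * α ^ p.1.2.natAbs)
  rw [heq, geomZ2_tsum hα0 hα1] at h
  norm_num at h
  linarith

set_option maxHeartbeats 2000000 in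
/-- Gaussian lattice sum bound: if `e^{-(π/2)(μΛ)²} ≤ 1/4` with `μ = min(a,β)`,
then `∑_{(n,m)≠(0,0)} e^{-(π/2)((nΛa)² + (mΛβ)²)} ≤ 8 e^{-(π/2)(μΛ)²}`. -/
theorem gaussian_lattice_sum_bound (a β Λ : ℝ) (ha : 0 < a) (hβ : 0 < β) (hΛ : 0 < Λ)
    (hsmall : Real.exp (-(Real.pi / 2) * (min a β * Λ) ^ 2) ≤ 1 / 4) :
    ∑' p : {p : ℤ × ℤ // p ≠ 0},
        Real.exp (-(Real.pi / 2) *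
          (((p.1.1 : ℝ) * Λ * a) ^ 2 + ((p.1.2 : ℝ) * Λ * β) ^ 2)) ≤
      8 * Real.exp (-(Real.pi / 2) * (min a β * Λ) ^ 2) := by
  set μ := min a β with hμdef
  set α : ℝ := Real.exp (-(Real.pi / 2) * (μ * Λ) ^ 2) with hαdef
  have hα0 : 0 < α := Real.exp_pos _
  have hα14 : α ≤ 1 / 4 := hsmall
  have hα1 : α < 1 := lt_of_le_of_lt hα14 (by norm_num)
  have hμa : μ ≤ a := min_le_left _ _
  have hμβ : μ ≤ β := min_le_right _ _
  have hμ0 : 0 < μ := lt_min ha hβ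
  -- termwise bound by the geometric majorant
  have hbound : ∀ p : ℤ × ℤ,
      Real.exp (-(Real.pi / 2) * (((p.1 : ℝ) * Λ * a) ^ 2 + ((p.2 : ℝ) * Λ * β) ^ 2)) ≤
        α ^ p.1.natAbs * α ^ p.2.natAbs := by
    intro ⟨n, m⟩
    have hg : α ^ n.natAbs * α ^ m.natAbs
        = Real.exp ((n.natAbs + m.natAbs : ℝ) * (-(Real.pi / 2) * (μ * Λ) ^ 2)) := by
      rw [hαdef, ← Real.exp_nat_mul, ← Real.exp_nat_mul, ← Real.exp_add]
      congr 1
      push_cast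
      ring
    rw [hg]
    apply Real.exp_le_exp.2
    have hn2 : (n.natAbs : ℝ) ≤ ((n : ℝ)) ^ 2 := by
      have h1 : (n.natAbs : ℝ) ≤ ((n.natAbs : ℝ)) ^ 2 := by
        rcases Nat.eq_zero_or_pos n.natAbs with h | h
        · simp [h]
        · have : (1:ℝ) ≤ n.natAbs := by exact_mod_cast h
          nlinarith
      calc (n.natAbs : ℝ) ≤ ((n.natAbs : ℝ)) ^ 2 := h1
        _ = ((n : ℝ)) ^ 2 := by rw [Nat.cast_natAbs]; push_cast; exact sq_abs _
    have hm2 : (m.natAbs : ℝ) ≤ ((m : ℝ)) ^ 2 := by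
      have h1 : (m.natAbs : ℝ) ≤ ((m.natAbs : ℝ)) ^ 2 := by
        rcases Nat.eq_zero_or_pos m.natAbs with h | h
        · simp [h]
        · have : (1:ℝ) ≤ m.natAbs := by exact_mod_cast h
          nlinarith
      calc (m.natAbs : ℝ) ≤ ((m.natAbs : ℝ)) ^ 2 := h1
        _ = ((m : ℝ)) ^ 2 := by rw [Nat.cast_natAbs]; push_cast; exact sq_abs _
    have h1 : ((n : ℝ)) ^ 2 * (μ * Λ) ^ 2 ≤ ((n : ℝ) * Λ * a) ^ 2 := by
      have : μ ^ 2 ≤ a ^ 2 := by nlinarith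
      nlinarith [sq_nonneg ((n:ℝ) * Λ), sq_nonneg (n:ℝ)]
    have h2 : ((m : ℝ)) ^ 2 * (μ * Λ) ^ 2 ≤ ((m : ℝ) * Λ * β) ^ 2 := by
      have : μ ^ 2 ≤ β ^ 2 := by nlinarith
      nlinarith [sq_nonneg ((m:ℝ) * Λ), sq_nonneg (m:ℝ)]
    have hμΛ : 0 < (μ * Λ) ^ 2 := by positivity
    have t1 : (n.natAbs : ℝ) * (μ * Λ) ^ 2 ≤ ((n : ℝ)) ^ 2 * (μ * Λ) ^ 2 :=
      mul_le_mul_of_nonneg_right hn2 hμΛ.le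
    have t2 : (m.natAbs : ℝ) * (μ * Λ) ^ 2 ≤ ((m : ℝ)) ^ 2 * (μ * Λ) ^ 2 :=
      mul_le_mul_of_nonneg_right hm2 hμΛ.le
    have hA : ((n.natAbs : ℝ) + m.natAbs) * (μ * Λ) ^ 2
        ≤ ((n : ℝ) * Λ * a) ^ 2 + ((m : ℝ) * Λ * β) ^ 2 := by
      have he : ((n.natAbs : ℝ) + m.natAbs) * (μ * Λ) ^ 2
          = (n.natAbs : ℝ) * (μ * Λ) ^ 2 + (m.natAbs : ℝ) * (μ * Λ) ^ 2 := by ring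
      linarith
    have hhalf : (0:ℝ) ≤ Real.pi / 2 := by positivity
    have hmul := mul_le_mul_of_nonneg_left hA hhalf
    nlinarith [hmul]
  have hgsubS : Summable (fun p : {p : ℤ × ℤ // p ≠ 0} =>
      α ^ p.1.1.natAbs * α ^ p.1.2.natAbs) := (geomZ2_summable hα0 hα1).subtype _
  have hfS : Summable (fun p : {p : ℤ × ℤ // p ≠ 0} =>
      Real.exp (-(Real.pi / 2) * (((p.1.1 : ℝ) * Λ * a) ^ 2 + ((p.1.2 : ℝ) * Λ * β) ^ 2))) :=
    Summable.of_nonneg_of_le (fun p => (Real.exp_pos _).le) (fun p => hbound p.1) hgsubS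
  have hle : ∑' p : {p : ℤ × ℤ // p ≠ 0},
      Real.exp (-(Real.pi / 2) * (((p.1.1 : ℝ) * Λ * a) ^ 2 + ((p.1.2 : ℝ) * Λ * β) ^ 2))
      ≤ (2 * (1 - α)⁻¹ - 1) ^ 2 - 1 := by
    rw [← geomZ2_tsum_ne_zero hα0 hα1]
    exact Summable.tsum_le_tsum (fun p => hbound p.1) hfS hgsubS
  refine hle.trans ?_
  have h1α : (0:ℝ) < 1 - α := by linarith
  have hu : (1 - α) * (1 - α)⁻¹ = 1 := mul_inv_cancel₀ h1α.ne'
  have hu4 : (1 - α)⁻¹ ≤ 4 / 3 := by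
    rw [inv_le_comm₀ h1α (by norm_num)]
    linarith
  have hupos : 0 < (1 - α)⁻¹ := inv_pos.2 h1α
  nlinarith [sq_nonneg ((1 - α)⁻¹ - 1), mul_pos hα0 hupos]
end

section
/- For every λ > 1 there is a constant C_λ such that for all n ≥ 0, 2∫_0^∞ u^{2n+1} e^{-(u−1)²} du ≤ C_λ λ^n n!. -/
open MeasureTheory

/-- For every `λ > 1` there is a constant `C` such that for all `n`,
`2 ∫_0^∞ u^{2n+1} e^{-(u-1)²} du ≤ C λ^n n!`. -/
theorem moment_integral_estimate (lam : ℝ) (hlam : 1 < lam) :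
    ∃ C : ℝ, ∀ n : ℕ,
      2 * (∫ u in Set.Ioi (0 : ℝ), u ^ (2 * n + 1) * Real.exp (-(u - 1) ^ 2)) ≤
        C * lam ^ n * n.factorial := by
  have hlam0 : (0 : ℝ) < lam := lt_trans one_pos hlam
  have ha : (0 : ℝ) < lam - 1 := by linarith
  set K : ℝ := Real.exp (1 / (lam - 1)) with hKdef
  have hK0 : 0 < K := Real.exp_pos _
  refine ⟨lam * K, fun n => ?_⟩
  set g : ℝ → ℝ := fun u => K * (u ^ ((2 * n + 1 : ℕ) : ℝ) * Real.exp (-lam⁻¹ * u ^ (2 : ℝ)))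
    with hg
  have hq : (-1 : ℝ) < ((2 * n + 1 : ℕ) : ℝ) :=
    lt_of_lt_of_le neg_one_lt_zero (Nat.cast_nonneg _)
  have hgint : IntegrableOn g (Set.Ioi (0 : ℝ)) := by
    exact (integrableOn_rpow_mul_exp_neg_mul_rpow hq two_pos (inv_pos.mpr hlam0)).const_mul K
  have hpt : ∀ u ∈ Set.Ioi (0 : ℝ),
      u ^ (2 * n + 1) * Real.exp (-(u - 1) ^ 2) ≤ g u := by
    intro u hu
    have hu0 : (0 : ℝ) < u := hu
    have h1 : u ^ ((2 * n + 1 : ℕ) : ℝ) = u ^ (2 * n + 1) := Real.rpow_natCast u _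
    have h2 : u ^ (2 : ℝ) = u ^ 2 := by
      rw [show (2:ℝ) = ((2:ℕ):ℝ) by norm_num, Real.rpow_natCast]
    rw [hg]
    simp only [h1, h2]
    have hexp : Real.exp (-(u - 1) ^ 2) ≤ K * Real.exp (-lam⁻¹ * u ^ 2) := by
      rw [hKdef, ← Real.exp_add]
      apply Real.exp_le_exp.mpr
      have h5 : 1 / (lam - 1) + -lam⁻¹ * u ^ 2 - (-(u - 1) ^ 2) =
          lam⁻¹ * (1 / (lam - 1)) * ((lam - 1) * u - lam) ^ 2 := by
        field_simp
        ring
      have h6 : 0 ≤ lam⁻¹ * (1 / (lam - 1)) * ((lam - 1) * u - lam) ^ 2 :=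
        mul_nonneg (mul_nonneg (inv_pos.mpr hlam0).le (one_div_pos.mpr ha).le)
          (sq_nonneg _)
      linarith
    calc u ^ (2 * n + 1) * Real.exp (-(u - 1) ^ 2)
        ≤ u ^ (2 * n + 1) * (K * Real.exp (-lam⁻¹ * u ^ 2)) := by
          exact mul_le_mul_of_nonneg_left hexp (by positivity)
      _ = K * (u ^ (2 * n + 1) * Real.exp (-lam⁻¹ * u ^ 2)) := by ring
  have hmono : (∫ u in Set.Ioi (0 : ℝ), u ^ (2 * n + 1) * Real.exp (-(u - 1) ^ 2)) ≤
      ∫ u in Set.Ioi (0 : ℝ), g u := by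
    apply integral_mono_of_nonneg
    · filter_upwards [ae_restrict_mem measurableSet_Ioi] with u hu
      have : (0:ℝ) < u := hu
      positivity
    · exact hgint
    · filter_upwards [ae_restrict_mem measurableSet_Ioi] with u hu
      exact hpt u hu
  have hval : (∫ u in Set.Ioi (0 : ℝ), g u) = K * (lam ^ (n + 1) * n.factorial / 2) := by
    rw [hg, integral_const_mul,
      integral_rpow_mul_exp_neg_mul_rpow two_pos hq (inv_pos.mpr hlam0)]
    have h4 : (-(((2 * n + 1 : ℕ) : ℝ) + 1) / 2) = -((n : ℝ) + 1) := by
      push_cast; ring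
    have h5 : ((((2 * n + 1 : ℕ) : ℝ) + 1) / 2) = (n : ℝ) + 1 := by
      push_cast; ring
    rw [h4, h5, Real.Gamma_nat_eq_factorial n,
      Real.inv_rpow hlam0.le, ← Real.rpow_neg hlam0.le, neg_neg,
      show ((n : ℝ) + 1) = ((n + 1 : ℕ) : ℝ) by push_cast; ring, Real.rpow_natCast]
    ring
  calc 2 * (∫ u in Set.Ioi (0 : ℝ), u ^ (2 * n + 1) * Real.exp (-(u - 1) ^ 2))
      ≤ 2 * (K * (lam ^ (n + 1) * n.factorial / 2)) := by
        have := hmono.trans_eq hval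
        linarith
    _ = lam * K * lam ^ n * n.factorial := by ring
end
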